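/- Let G_b = (V,E_b) be a finite simple graph with maximum degree at most Δ, let D ⊆ E_b, let A be the set of endpoints of edges in D, and let G = (V, E_b∖D). Let V_H ⊆ V, let H = G[V_H] be the subgraph of G induced by V_H, and let A_H be the set of endpoints of edges in ∂_G(V_H). Then for every S ⊆ V_H: δ_{G_b}(S) ≤ δ_H(S) + Δ·|S ∩ (A ∪ A_H)|. -/
import Mathlib


/-- Edges of `G` with one endpoint in `S` and the other endpoint in `U \ S`:
the cut edges `∂(S)` of `S`, inside the subgraph of `G` induced by `U` (when `S ⊆ U`). -/
def cutEdgesIn {V : Type*} (G : SimpleGraph V) (U S : Set V) : Set (Sym2 V) :=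
  {e | e ∈ G.edgeSet ∧ ∃ u v, e = s(u, v) ∧ u ∈ S ∧ v ∈ U ∧ v ∉ S}

/-- `δ(S)`, the number of cut edges of `S` inside the subgraph induced by `U`. -/
noncomputable def deltaIn {V : Type*} (G : SimpleGraph V) (U S : Set V) : ℕ :=
  (cutEdgesIn G U S).ncard

/-- The expansion `φ(S)` of the cut `S` inside the subgraph of `G` induced by `U`. -/
noncomputable def phiIn {V : Type*} (G : SimpleGraph V) (U S : Set V) : ℝ :=
  (deltaIn G U S : ℝ) / min (S.ncard : ℝ) ((U \ S).ncard : ℝ)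

/-- Let `G_b` have maximum degree ≤ `Δ`, `D ⊆ E_b`, `A` the endpoints of `D`,
`G = (V, E_b ∖ D)`, `H = G[V_H]` the induced subgraph, `A_H` the endpoints of `∂_G(V_H)`.
Then for every `S ⊆ V_H`: `δ_{G_b}(S) ≤ δ_H(S) + Δ·|S ∩ (A ∪ A_H)|`. -/
theorem stmt6 {V : Type*} [Fintype V] (Gb : SimpleGraph V) (Δ : ℕ)
    (hdeg : ∀ v : V, (Gb.neighborSet v).ncard ≤ Δ)
    (D : Set (Sym2 V)) (hD : D ⊆ Gb.edgeSet)
    (VH S : Set V) (hS : S ⊆ VH) :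
    deltaIn Gb Set.univ S ≤
      deltaIn (Gb.deleteEdges D) VH S +
        Δ * (S ∩ ({v : V | ∃ e ∈ D, v ∈ e} ∪
          {v : V | ∃ e ∈ cutEdgesIn (Gb.deleteEdges D) Set.univ VH, v ∈ e})).ncard := by
  classical
  set T : Set V := S ∩ ({v : V | ∃ e ∈ D, v ∈ e} ∪
      {v : V | ∃ e ∈ cutEdgesIn (Gb.deleteEdges D) Set.univ VH, v ∈ e}) with hT
  set X : Set (Sym2 V) := {e | e ∈ Gb.edgeSet ∧ ∃ u ∈ T, u ∈ e} with hX
  have hsub : cutEdgesIn Gb Set.univ S ⊆ cutEdgesIn (Gb.deleteEdges D) VH S ∪ X := by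
    rintro e ⟨he, u, v, rfl, hu, -, hv⟩
    by_cases heD : s(u, v) ∈ D
    · right
      exact ⟨he, u, ⟨hu, Or.inl ⟨s(u, v), heD, Sym2.mem_mk_left u v⟩⟩, Sym2.mem_mk_left u v⟩
    · have heG : s(u, v) ∈ (Gb.deleteEdges D).edgeSet := by
        rw [SimpleGraph.edgeSet_deleteEdges]; exact ⟨he, heD⟩
      by_cases hvH : v ∈ VH
      · exact Or.inl ⟨heG, u, v, rfl, hu, hvH, hv⟩
      · right
        refine ⟨he, u, ⟨hu, Or.inr ⟨s(u, v), ⟨heG, u, v, rfl, hS hu, Set.mem_univ v, hvH⟩,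
          Sym2.mem_mk_left u v⟩⟩, Sym2.mem_mk_left u v⟩
  have hTfin : T.Finite := Set.toFinite T
  have hXfin : X.Finite := Set.toFinite X
  have hXcard : X.ncard ≤ Δ * T.ncard := by
    have hsub2 : X ⊆ ↑(hTfin.toFinset.biUnion fun u => Gb.incidenceFinset u) := by
      rintro e ⟨he, u, huT, hue⟩
      simp only [Finset.coe_biUnion, Set.mem_iUnion, Finset.mem_coe, Set.Finite.mem_toFinset]
      exact ⟨u, huT, by rw [SimpleGraph.mem_incidenceFinset]; exact ⟨he, hue⟩⟩
    calc X.ncard ≤ (hTfin.toFinset.biUnion fun u => Gb.incidenceFinset u).card := by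
          rw [← Set.ncard_coe_finset]
          exact Set.ncard_le_ncard hsub2 (Set.toFinite _)
      _ ≤ ∑ u ∈ hTfin.toFinset, (Gb.incidenceFinset u).card := Finset.card_biUnion_le
      _ ≤ ∑ u ∈ hTfin.toFinset, Δ := by
          refine Finset.sum_le_sum fun u _ => ?_
          rw [SimpleGraph.card_incidenceFinset_eq_degree, ← SimpleGraph.card_neighborFinset_eq_degree]
          have := hdeg u
          rw [SimpleGraph.neighborFinset_def, ← Set.ncard_eq_toFinset_card']
          exact hdeg u
      _ = Δ * T.ncard := by
          rw [Finset.sum_const, smul_eq_mul, mul_comm, Set.ncard_eq_toFinset_card' ,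
            Set.toFinite_toFinset]
  calc deltaIn Gb Set.univ S ≤ (cutEdgesIn (Gb.deleteEdges D) VH S ∪ X).ncard :=
        Set.ncard_le_ncard hsub (Set.toFinite _)
    _ ≤ deltaIn (Gb.deleteEdges D) VH S + X.ncard := Set.ncard_union_le _ _
    _ ≤ deltaIn (Gb.deleteEdges D) VH S + Δ * T.ncard := by omega
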